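/- Let h, σ, V > 0. For B̃ < 0, let p₀(B̃) denote the unique positive root of Ξ(p) = −B̃·log₂(1 + h·p/σ) − (h/((σ + h·p)·ln 2))·(V − B̃·p). Then p₀ is strictly increasing in B̃: whenever B̃₋ < B̃₊ < 0, one has p₀(B̃₋) < p₀(B̃₊). Consequently, for any fixed 0 < p_L ≤ p_U, the optimal transmit power min(max(p₀(B̃), p_L), p_U) is non-decreasing in B̃ on (−∞, 0). -/

import Mathlib

/-- The unconstrained optimal transmit power `p₀(B̃)` (the unique positive root of
`Ξ(·, B̃)`) is strictly increasing in the virtual energy queue length `B̃` on `(−∞, 0)`,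
and consequently the clamped optimal transmit power `min(max(p₀(B̃), p_L), p_U)` is
non-decreasing in `B̃` on `(−∞, 0)`. -/
theorem stmt_14 (h σ V : ℝ) (hh : 0 < h) (hσ : 0 < σ) (hV : 0 < V)
    (p₀ : ℝ → ℝ)
    (hp₀ : ∀ Btilde : ℝ, Btilde < 0 → 0 < p₀ Btilde ∧
      -Btilde * Real.logb 2 (1 + h * p₀ Btilde / σ)
        - (h / ((σ + h * p₀ Btilde) * Real.log 2)) * (V - Btilde * p₀ Btilde) = 0) :
    StrictMonoOn p₀ (Set.Iio 0) ∧
    (∀ pL pU : ℝ, 0 < pL → pL ≤ pU →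
      MonotoneOn (fun Btilde => min (max (p₀ Btilde) pL) pU) (Set.Iio 0)) := by
  have hl2 : Real.log 2 ≠ 0 := by positivity
  set Φ : ℝ → ℝ → ℝ := fun B p =>
    -B * ((σ + h * p) * Real.log (1 + h * p / σ)) - h * (V - B * p) with hΦ
  clear_value Φ
  -- Φ vanishes at the root
  have hroot : ∀ B : ℝ, B < 0 → Φ B (p₀ B) = 0 := by
    intro B hB
    obtain ⟨hp, hE⟩ := hp₀ B hB
    have hsp : σ + h * p₀ B ≠ 0 := by positivity
    rw [Real.logb] at hE
    field_simp at hE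
    simp only [hΦ]
    have hrw : 1 + h * p₀ B / σ = (σ + h * p₀ B) / σ := by field_simp
    rw [hrw]
    have hmul : Real.log 2 *
        (-B * ((σ + h * p₀ B) * Real.log ((σ + h * p₀ B) / σ)) - h * (V - B * p₀ B))
        = Real.log 2 * 0 := by linear_combination Real.log 2 * hE
    exact mul_left_cancel₀ hl2 hmul
  -- Key inequality: h p < (σ + h p) log(1 + h p / σ) for p > 0
  have hkey : ∀ p : ℝ, 0 < p → h * p < (σ + h * p) * Real.log (1 + h * p / σ) := by
    intro p hp
    have hpos : 0 < h * p / σ := by positivity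
    have hx1 : 1 < 1 + h * p / σ := by linarith
    have hsp : (0:ℝ) < σ + h * p := by positivity
    have h1 : Real.log (1 + h * p / σ)⁻¹ < (1 + h * p / σ)⁻¹ - 1 :=
      Real.log_lt_sub_one_of_pos (by positivity) (by
        intro hc; rw [inv_eq_one] at hc; linarith)
    rw [Real.log_inv] at h1
    have hlog : 1 - (1 + h * p / σ)⁻¹ < Real.log (1 + h * p / σ) := by linarith
    have hxe : 1 - (1 + h * p / σ)⁻¹ = h * p / (σ + h * p) := by
      rw [inv_eq_one_div]
      field_simp
      ring
    rw [hxe] at hlog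
    have := (div_lt_iff₀ hsp).mp hlog
    nlinarith
  -- Φ is monotone (nondecreasing) in p on [0, ∞) for B < 0
  have hmono : ∀ B : ℝ, B < 0 → MonotoneOn (Φ B) (Set.Ici (0:ℝ)) := by
    intro B hB
    have hderiv : ∀ p : ℝ, 0 ≤ p →
        HasDerivAt (Φ B) (-B * h * Real.log (1 + h * p / σ)) p := by
      intro p hp
      have hw : (0:ℝ) < 1 + h * p / σ := by
        have : 0 ≤ h * p / σ := by positivity
        linarith
      have h1 : HasDerivAt (fun p : ℝ => 1 + h * p / σ) (h / σ) p := by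
        simpa using (((hasDerivAt_id p).const_mul h).div_const σ).const_add 1
      have h2 : HasDerivAt (fun p : ℝ => Real.log (1 + h * p / σ))
          ((h / σ) / (1 + h * p / σ)) p := h1.log (ne_of_gt hw)
      have h3 : HasDerivAt (fun p : ℝ => σ + h * p) h p := by
        simpa using ((hasDerivAt_id p).const_mul h).const_add σ
      have h4 := ((h3.mul h2).const_mul (-B)).sub
        (((hasDerivAt_id p).const_mul B).const_sub V |>.const_mul h)
      have h5 : HasDerivAt (Φ B)
          (-B * (h * Real.log (1 + h * p / σ) + (σ + h * p) * (h / σ / (1 + h * p / σ)))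
            - h * -(B * 1)) p := by
        simp only [hΦ]; exact h4
      have hsp : σ + h * p ≠ 0 := by
        have : 0 ≤ h * p := by positivity
        intro hc; linarith [hσ]
      have heq : -B * (h * Real.log (1 + h * p / σ)
            + (σ + h * p) * (h / σ / (1 + h * p / σ))) - h * -(B * 1)
          = -B * h * Real.log (1 + h * p / σ) := by
        field_simp
        ring
      rw [← heq]
      exact h5
    apply monotoneOn_of_deriv_nonneg (convex_Ici 0)
    · exact fun p hp => (hderiv p hp).continuousAt.continuousWithinAt
    · intro p hp
      rw [interior_Ici] at hp
      exact (hderiv p (le_of_lt hp)).differentiableAt.differentiableWithinAt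
    · intro p hp
      rw [interior_Ici] at hp
      rw [(hderiv p (le_of_lt hp)).deriv]
      have hp' : 0 < p := hp
      have hw : (1:ℝ) ≤ 1 + h * p / σ := by
        have : 0 < h * p / σ := div_pos (mul_pos hh hp') hσ
        linarith
      have hL : 0 ≤ Real.log (1 + h * p / σ) := Real.log_nonneg hw
      have : 0 ≤ -B * h := by nlinarith
      exact mul_nonneg this hL
  -- main strict monotonicity
  have hsm : StrictMonoOn p₀ (Set.Iio 0) := by
    intro B₁ hB₁ B₂ hB₂ hlt
    simp only [Set.mem_Iio] at hB₁ hB₂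
    obtain ⟨hp₁, _⟩ := hp₀ B₁ hB₁
    obtain ⟨hp₂, _⟩ := hp₀ B₂ hB₂
    have e₁ := hroot B₁ hB₁
    have e₂ := hroot B₂ hB₂
    have hneg : Φ B₂ (p₀ B₁) < 0 := by
      have hc := hkey (p₀ B₁) hp₁
      have hdiff : Φ B₂ (p₀ B₁) - Φ B₁ (p₀ B₁) =
          (B₂ - B₁) * (h * p₀ B₁ - (σ + h * p₀ B₁) * Real.log (1 + h * p₀ B₁ / σ)) := by
        simp only [hΦ]; ring
      have hprod : (B₂ - B₁) *
          (h * p₀ B₁ - (σ + h * p₀ B₁) * Real.log (1 + h * p₀ B₁ / σ)) < 0 :=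
        mul_neg_of_pos_of_neg (by linarith) (by linarith)
      nlinarith [hdiff, hprod, e₁]
    by_contra hcon
    push_neg at hcon
    have := hmono B₂ hB₂ (Set.mem_Ici.mpr (le_of_lt hp₂)) (Set.mem_Ici.mpr (le_of_lt hp₁)) hcon
    rw [e₂] at this
    linarith
  refine ⟨hsm, fun pL pU hpL hle B₁ hB₁ B₂ hB₂ hlt => ?_⟩
  rcases eq_or_lt_of_le hlt with rfl | hlt'
  · exact le_refl _
  · have := le_of_lt (hsm hB₁ hB₂ hlt')
    exact min_le_min (max_le_max this le_rfl) le_rfl
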